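/- For every integer r ≥ 2 there exists a constant c > 0 such that every r-uniform hypergraph with maximum degree at most Δ, where Δ ≥ 1, has chromatic number at most c · Δ^{1/(r−1)}. -/

import Mathlib

open Finset

namespace ELC
variable {n k : ℕ}

def Mono (col : Fin n → Fin k) (e : Finset (Fin n)) : Prop :=
  ∀ u ∈ e, ∀ w ∈ e, col u = col w

instance (col : Fin n → Fin k) (e : Finset (Fin n)) : Decidable (Mono col e) := by
  unfold Mono; infer_instance

def Avoid (k : ℕ) (S : Finset (Finset (Fin n))) : Finset (Fin n → Fin k) :=
  Finset.univ.filter (fun col => ∀ f ∈ S, ¬ Mono col f)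

lemma mono_congr {col col' : Fin n → Fin k} {f : Finset (Fin n)}
    (h : ∀ v ∈ f, col' v = col v) : Mono col' f ↔ Mono col f := by
  unfold Mono
  constructor <;> intro hm u hu w hw
  · rw [← h u hu, ← h w hw]; exact hm u hu w hw
  · rw [h u hu, h w hw]; exact hm u hu w hw

lemma mono_count (e : Finset (Fin n)) (he : e.Nonempty) (S₂ : Finset (Finset (Fin n)))
    (hdisj : ∀ f ∈ S₂, Disjoint f e) :
    ((Avoid k S₂).filter (fun col => Mono col e)).card * k ^ (e.card - 1)
      ≤ (Avoid k S₂).card := by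
  obtain ⟨v₀, hv₀⟩ := he
  set e' := e.erase v₀ with he'
  have hcard : (Fintype.card (↥e' → Fin k)) = k ^ (e.card - 1) := by
    rw [Fintype.card_fun, Fintype.card_coe, Fintype.card_fin, card_erase_of_mem hv₀]
  have key : (((Avoid k S₂).filter (fun col => Mono col e)) ×ˢ
      (univ : Finset (↥e' → Fin k))).card ≤ (Avoid k S₂).card := by
    set Φ : ((Fin n → Fin k) × (↥e' → Fin k)) → (Fin n → Fin k) :=
    fun p v => if h : v ∈ e' then p.2 ⟨v, h⟩ else p.1 v with hΦ
    apply Finset.card_le_card_of_injOn Φ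
    · rintro ⟨col, g⟩ hp
      simp only [mem_coe, mem_product, mem_filter, mem_univ, and_true, true_and] at hp
      obtain ⟨hav, _⟩ := hp
      simp only [Avoid, mem_coe, mem_filter, mem_univ, true_and] at hav ⊢
      intro f hf
      have hval : ∀ v ∈ f, Φ (col, g) v = col v := by
        intro v hv
        have : v ∉ e' := fun hc => (hdisj f hf).forall_ne_finset hv (mem_of_mem_erase hc) rfl
        simp [hΦ, this]
      rw [mono_congr hval]
      exact hav f hf
    · rintro ⟨col, g⟩ hp ⟨col', g'⟩ hp' heq
      simp only [mem_coe, mem_product, mem_filter, mem_univ, and_true, true_and] at hp hp'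
      have hm := hp.2
      have hm' := hp'.2
      have hg : g = g' := by
        funext ⟨v, hv⟩
        have := congrFun heq v
        simpa [hΦ, hv] using this
      have hv₀ne : v₀ ∉ e' := notMem_erase _ _
      have hcv₀ : col v₀ = col' v₀ := by
        have := congrFun heq v₀
        simpa [hΦ, hv₀ne] using this
      have hcol : col = col' := by
        funext v
        by_cases hv : v ∈ e'
        · calc col v = col v₀ := hm v (mem_of_mem_erase hv) v₀ hv₀
            _ = col' v₀ := hcv₀
            _ = col' v := hm' v₀ hv₀ v (mem_of_mem_erase hv)
        · have := congrFun heq v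
          simpa [hΦ, hv] using this
      rw [hg, hcol]
  rwa [Finset.card_product, Finset.card_univ, hcard] at key

lemma avoid_anti {S T : Finset (Finset (Fin n))} (h : S ⊆ T) : Avoid k T ⊆ Avoid k S := by
  intro col hcol
  simp only [Avoid, mem_filter, mem_univ, true_and] at hcol ⊢
  exact fun f hf => hcol f (h hf)

lemma card_avoid_insert (e : Finset (Fin n)) (S : Finset (Finset (Fin n))) :
    ((Avoid k S).filter (fun col => Mono col e)).card + (Avoid k (insert e S)).card
      = (Avoid k S).card := by
  have h : Avoid k (insert e S) = (Avoid k S).filter (fun col => ¬ Mono col e) := by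
    ext col
    simp only [Avoid, mem_filter, mem_univ, true_and, mem_insert]
    constructor
    · intro h; exact ⟨fun f hf => h f (Or.inr hf), h e (Or.inl rfl)⟩
    · rintro ⟨h1, h2⟩ f (rfl | hf)
      · exact h2
      · exact h1 f hf
  rw [h]
  exact Finset.card_filter_add_card_filter_not _



lemma lll_step {n k r Δ : ℕ} (hr : 2 ≤ r) (hΔ : 1 ≤ Δ) {E : Finset (Finset (Fin n))}
    (hEr : ∀ e ∈ E, e.card = r)
    (hdeg : ∀ v : Fin n, (E.filter (fun e => v ∈ e)).card ≤ Δ)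
    (hk : 4 * (r * Δ) ≤ k ^ (r - 1)) :
    ∀ s : ℕ, ∀ S ⊆ E, S.card = s → ∀ e ∈ E,
      (1 - (1 : ℝ) / (2 * (r * Δ))) * ((Avoid k S).card : ℝ)
        ≤ ((Avoid k (insert e S)).card : ℝ) := by
  set d : ℕ := r * Δ with hd
  set q : ℝ := 1 / (2 * ((r : ℝ) * (Δ : ℝ))) with hq
  have hd2 : (2 : ℝ) ≤ (d : ℝ) := by
    have : 2 ≤ d := le_trans hr (Nat.le_mul_of_pos_right r hΔ)
    exact_mod_cast this
  have hqd' : q = 1 / (2 * (d : ℝ)) := by rw [hq, hd]; push_cast; ring_nf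
  have hq_pos : 0 < q := by rw [hqd']; positivity
  have hdq : (d : ℝ) * q = 1 / 2 := by
    rw [hqd']; field_simp
  have hq_lt : q < 1 := by
    rw [hqd', div_lt_one (by linarith)]
    linarith
  have h1q : 0 < 1 - q := by linarith
  intro s
  induction s using Nat.strong_induction_on with
  | _ s ih =>
  intro S hSE hcard e heE
  by_cases heS : e ∈ S
  · rw [Finset.insert_eq_self.2 heS]
    have h0 : (0:ℝ) ≤ q * ((Avoid k S).card : ℝ) :=
      mul_nonneg hq_pos.le (Nat.cast_nonneg _)
    nlinarith [Nat.cast_nonneg (α := ℝ) (Avoid k S).card]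
  -- split S into edges meeting e and edges disjoint from e
  set S₁ := S.filter (fun f => ¬ Disjoint f e) with hS₁
  set S₂ := S.filter (fun f => Disjoint f e) with hS₂
  have hS₂E : S₂ ⊆ E := (filter_subset _ _).trans hSE
  have hunion : S₂ ∪ S₁ = S := by
    rw [hS₁, hS₂, Finset.filter_union_filter_not_eq]
  have hm_le : S₁.card ≤ d := by
    have hsub : S₁ ⊆ e.biUnion (fun v => E.filter (fun f => v ∈ f)) := by
      intro f hf
      rw [hS₁, mem_filter] at hf
      obtain ⟨hfS, hnd⟩ := hf
      obtain ⟨v, hvf, hve⟩ := Finset.not_disjoint_iff.1 hnd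
      exact Finset.mem_biUnion.2 ⟨v, hve, mem_filter.2 ⟨hSE hfS, hvf⟩⟩
    calc S₁.card ≤ (e.biUnion (fun v => E.filter (fun f => v ∈ f))).card :=
          card_le_card hsub
      _ ≤ ∑ v ∈ e, (E.filter (fun f => v ∈ f)).card := card_biUnion_le
      _ ≤ ∑ v ∈ e, Δ := Finset.sum_le_sum (fun v _ => hdeg v)
      _ = e.card * Δ := by rw [Finset.sum_const, smul_eq_mul]
      _ = d := by rw [hEr e heE, hd]
  -- chain: N (S₂ ∪ T) ≥ (1-q)^|T| N S₂ for T ⊆ S₁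
  have chain : ∀ T : Finset (Finset (Fin n)), T ⊆ S₁ →
      (1 - q) ^ T.card * ((Avoid k S₂).card : ℝ) ≤ ((Avoid k (S₂ ∪ T)).card : ℝ) := by
    intro T
    induction T using Finset.induction_on with
    | empty => simp
    | @insert a T' ha ihT =>
      intro hins
      have hT'sub : T' ⊆ S₁ := (Finset.subset_insert a T').trans hins
      have haS₁ : a ∈ S₁ := hins (Finset.mem_insert_self a T')
      have haS : a ∈ S := (filter_subset _ _) haS₁
      have haS₂ : a ∉ S₂ := by
        rw [hS₂, mem_filter]
        rw [hS₁, mem_filter] at haS₁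
        tauto
      have hanot : a ∉ S₂ ∪ T' := by
        simp only [Finset.mem_union]
        tauto
      have hsubS : S₂ ∪ T' ⊆ S := Finset.union_subset (filter_subset _ _)
          (hT'sub.trans (filter_subset _ _))
      have hcard_lt : (S₂ ∪ T').card < s := by
        rw [← hcard]
        apply Finset.card_lt_card
        exact Finset.ssubset_iff_of_subset hsubS |>.2 ⟨a, haS, hanot⟩
      have hstep := ih _ hcard_lt (S₂ ∪ T') (hsubS.trans hSE) rfl a (hSE haS)
      rw [Finset.union_insert, Finset.card_insert_of_notMem ha, pow_succ]
      calc (1 - q) ^ T'.card * (1 - q) * ((Avoid k S₂).card : ℝ)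
          = (1 - q) * ((1 - q) ^ T'.card * ((Avoid k S₂).card : ℝ)) := by ring
        _ ≤ (1 - q) * ((Avoid k (S₂ ∪ T')).card : ℝ) := by
            apply mul_le_mul_of_nonneg_left (ihT hT'sub) (le_of_lt h1q)
        _ ≤ ((Avoid k (insert a (S₂ ∪ T'))).card : ℝ) := hstep
  have hchainS : (1 - q) ^ S₁.card * ((Avoid k S₂).card : ℝ) ≤ ((Avoid k S).card : ℝ) := by
    have := chain S₁ (Finset.Subset.refl _)
    rwa [hunion] at this
  -- counting
  have he_card : e.card = r := hEr e heE
  have he_ne : e.Nonempty := by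
    rw [← Finset.card_pos, he_card]; omega
  have hdisj : ∀ f ∈ S₂, Disjoint f e := fun f hf => (mem_filter.1 hf).2
  have hM₂ := mono_count (k := k) e he_ne S₂ hdisj
  rw [he_card] at hM₂
  have hMle : ((Avoid k S).filter (fun col => Mono col e)).card
      ≤ ((Avoid k S₂).filter (fun col => Mono col e)).card :=
    card_le_card (Finset.filter_subset_filter _ (avoid_anti (filter_subset _ _)))
  have hkey := card_avoid_insert (k := k) e S
  -- numeric facts
  have hkpow : (4 : ℝ) * d ≤ (k : ℝ) ^ (r - 1) := by exact_mod_cast hk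
  have hber : (1 : ℝ) / 2 ≤ (1 - q) ^ d := by
    have h := one_add_mul_le_pow (a := -q) (by linarith) d
    have h2 : (1 : ℝ) + (d : ℝ) * (-q) = 1 / 2 := by
      rw [mul_neg, hdq]; ring
    rw [h2] at h
    simpa [sub_eq_add_neg] using h
  have hqd : 1 ≤ (k : ℝ) ^ (r - 1) * (q * (1 - q) ^ d) := by
    have hstep1 : (4*(d:ℝ)) * (q * (1/2)) ≤ (k:ℝ)^(r-1) * (q*(1-q)^d) := by
      apply mul_le_mul hkpow (mul_le_mul_of_nonneg_left hber hq_pos.le)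
        (by positivity) (by nlinarith)
    have hone : (4*(d:ℝ))*(q*(1/2)) = 1 := by
      have : (4*(d:ℝ))*(q*(1/2)) = 2*((d:ℝ)*q) := by ring
      rw [this, hdq]; norm_num
    linarith
  -- put it together
  have hmonot : (1 - q) ^ d ≤ (1 - q) ^ S₁.card :=
    pow_le_pow_of_le_one (le_of_lt h1q) (by linarith) hm_le
  have hNS₂ : (0:ℝ) ≤ ((Avoid k S₂).card : ℝ) := Nat.cast_nonneg _
  have hMfinal : (((Avoid k S).filter (fun col => Mono col e)).card : ℝ)
      ≤ q * ((Avoid k S).card : ℝ) := by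
    have hkpos : (0:ℝ) < (k:ℝ) ^ (r-1) := by linarith
    have hA : (((Avoid k S).filter (fun col => Mono col e)).card : ℝ) * ((k:ℝ)^(r-1))
        ≤ ((Avoid k S₂).card : ℝ) := by
      calc (((Avoid k S).filter (fun col => Mono col e)).card : ℝ) * ((k:ℝ)^(r-1))
          ≤ (((Avoid k S₂).filter (fun col => Mono col e)).card : ℝ) * ((k:ℝ)^(r-1)) := by
            apply mul_le_mul_of_nonneg_right (by exact_mod_cast hMle) (le_of_lt hkpos)
        _ ≤ ((Avoid k S₂).card : ℝ) := by exact_mod_cast hM₂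
    -- q * N S ≥ q * (1-q)^{S₁.card} * N S₂ ≥ q (1-q)^d N S₂ ≥ N S₂ / k^(r-1) ≥ M
    have hB : ((Avoid k S₂).card : ℝ) ≤ (k:ℝ)^(r-1) * (q * ((Avoid k S).card : ℝ)) := by
      calc ((Avoid k S₂).card : ℝ)
          ≤ ((k:ℝ)^(r-1) * (q * (1-q)^d)) * ((Avoid k S₂).card : ℝ) := by
            nlinarith [mul_le_mul_of_nonneg_right hqd hNS₂]
        _ = (k:ℝ)^(r-1) * (q * ((1-q)^d * ((Avoid k S₂).card : ℝ))) := by ring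
        _ ≤ (k:ℝ)^(r-1) * (q * ((Avoid k S).card : ℝ)) := by
            apply mul_le_mul_of_nonneg_left _ (by positivity)
            apply mul_le_mul_of_nonneg_left _ (le_of_lt hq_pos)
            calc (1-q)^d * ((Avoid k S₂).card : ℝ)
                ≤ (1-q)^S₁.card * ((Avoid k S₂).card : ℝ) :=
                  mul_le_mul_of_nonneg_right hmonot hNS₂
              _ ≤ ((Avoid k S).card : ℝ) := hchainS
    nlinarith
  have hcast : (((Avoid k S).filter (fun col => Mono col e)).card : ℝ)
      + ((Avoid k (insert e S)).card : ℝ) = ((Avoid k S).card : ℝ) := by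
    exact_mod_cast congrArg (Nat.cast : ℕ → ℝ) hkey
  linarith


lemma lll_pos {n k r Δ : ℕ} (hr : 2 ≤ r) (hΔ : 1 ≤ Δ) {E : Finset (Finset (Fin n))}
    (hEr : ∀ e ∈ E, e.card = r)
    (hdeg : ∀ v : Fin n, (E.filter (fun e => v ∈ e)).card ≤ Δ)
    (hk : 4 * (r * Δ) ≤ k ^ (r - 1)) (hk1 : 1 ≤ k) :
    (Avoid k E).Nonempty := by
  set q : ℝ := 1 / (2 * ((r : ℝ) * (Δ : ℝ))) with hq
  have hd2 : (2 : ℝ) ≤ (r : ℝ) * (Δ : ℝ) := by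
    have : 2 ≤ r * Δ := le_trans hr (Nat.le_mul_of_pos_right r hΔ)
    exact_mod_cast this
  have hq_pos : 0 < q := by rw [hq]; positivity
  have h1q : 0 < 1 - q := by
    have : q < 1 := by
      rw [hq, div_lt_one (by linarith)]; linarith
    linarith
  have key : ∀ S ⊆ E, (1 - q) ^ S.card * ((k : ℝ) ^ n) ≤ ((Avoid k S).card : ℝ) := by
    intro S
    induction S using Finset.induction_on with
    | empty =>
      intro _
      have : (Avoid k (∅ : Finset (Finset (Fin n)))).card = k ^ n := by
        simp only [Avoid, Finset.notMem_empty, false_implies, implies_true,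
          Finset.filter_true_of_mem, Finset.card_univ]
        rw [Fintype.card_fun]
        simp
      rw [this]
      push_cast
      simp
    | @insert a S ha ihS =>
      intro hins
      have hSsub : S ⊆ E := (Finset.subset_insert a S).trans hins
      have haE : a ∈ E := hins (Finset.mem_insert_self a S)
      have hstep := lll_step hr hΔ hEr hdeg hk S.card S hSsub rfl a haE
      rw [Finset.card_insert_of_notMem ha, pow_succ]
      calc (1 - q) ^ S.card * (1 - q) * ((k : ℝ) ^ n)
          = (1 - q) * ((1 - q) ^ S.card * ((k : ℝ) ^ n)) := by ring
        _ ≤ (1 - q) * ((Avoid k S).card : ℝ) :=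
            mul_le_mul_of_nonneg_left (ihS hSsub) h1q.le
        _ ≤ ((Avoid k (insert a S)).card : ℝ) := hstep
  have hfin := key E (Finset.Subset.refl E)
  have hpos : (0 : ℝ) < (1 - q) ^ E.card * ((k : ℝ) ^ n) := by
    have hk0 : (0 : ℝ) < (k : ℝ) := by exact_mod_cast hk1
    positivity
  rw [← Finset.card_pos]
  have hlt : (0:ℝ) < ((Avoid k E).card : ℝ) := lt_of_lt_of_le hpos hfin
  exact_mod_cast hlt


end ELC

/-- For every `r ≥ 2` there is a constant `c > 0` such that every `r`-uniform
hypergraph with maximum degree at most `Δ ≥ 1` has chromatic number at most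
`c · Δ^(1/(r-1))`: it has a proper colouring with some number `k` of colours
satisfying `k ≤ c · Δ^(1/(r-1))`. -/
theorem erdos_lovasz_chromatic (r : ℕ) (hr : 2 ≤ r) :
    ∃ c : ℝ, 0 < c ∧
      ∀ (n : ℕ) (E : Finset (Finset (Fin n))) (Δ : ℕ), 1 ≤ Δ →
        (∀ e ∈ E, e.card = r) →
        (∀ v : Fin n, (E.filter (fun e => v ∈ e)).card ≤ Δ) →
        ∃ k : ℕ,
          (∃ col : Fin n → Fin k, ∀ e ∈ E, ∃ u ∈ e, ∃ w ∈ e, col u ≠ col w) ∧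
          (k : ℝ) ≤ c * (Δ : ℝ) ^ ((1 : ℝ) / ((r : ℝ) - 1)) := by
  have hrr : (0 : ℝ) < (r : ℝ) - 1 := by
    have : (2 : ℝ) ≤ (r : ℝ) := by exact_mod_cast hr
    linarith
  set ex : ℝ := (1 : ℝ) / ((r : ℝ) - 1) with hexdef
  have hex_pos : 0 < ex := by positivity
  refine ⟨(4 * (r : ℝ)) ^ ex + 1, by positivity, ?_⟩
  intro n E Δ hΔ hEr hdeg
  have hΔ1 : (1 : ℝ) ≤ (Δ : ℝ) := by exact_mod_cast hΔ
  have hr1 : (1 : ℝ) ≤ (r : ℝ) := by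
    have : (2:ℝ) ≤ (r:ℝ) := by exact_mod_cast hr
    linarith
  set x : ℝ := (4 * (r : ℝ) * (Δ : ℝ)) ^ ex with hx
  have hbase1 : (1 : ℝ) ≤ 4 * (r : ℝ) * (Δ : ℝ) := by nlinarith
  have hx1 : 1 ≤ x := Real.one_le_rpow hbase1 hex_pos.le
  set k : ℕ := ⌈x⌉₊ with hkdef
  have hk1 : 1 ≤ k := by
    rw [hkdef]
    exact Nat.one_le_iff_ne_zero.2 (by positivity)
  have hkx : x ≤ (k : ℝ) := Nat.le_ceil x
  -- k^(r-1) ≥ 4 r Δ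
  have hcast : ((r - 1 : ℕ) : ℝ) = (r : ℝ) - 1 := by
    rw [Nat.cast_sub (by omega)]; simp
  have hxpow : x ^ (r - 1) = 4 * (r : ℝ) * (Δ : ℝ) := by
    rw [hx, ← Real.rpow_natCast ((4 * (r : ℝ) * (Δ : ℝ)) ^ ex) (r-1),
      ← Real.rpow_mul (by linarith), hcast, hexdef,
      one_div_mul_cancel (ne_of_gt hrr), Real.rpow_one]
  have hkpowR : 4 * (r : ℝ) * (Δ : ℝ) ≤ (k : ℝ) ^ (r - 1) := by
    rw [← hxpow]
    exact pow_le_pow_left₀ (by linarith) hkx _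
  have hk : 4 * (r * Δ) ≤ k ^ (r - 1) := by
    have : ((4 * (r * Δ) : ℕ) : ℝ) ≤ ((k ^ (r - 1) : ℕ) : ℝ) := by
      push_cast
      calc ((4:ℝ) * ((r:ℝ) * (Δ:ℝ))) = 4 * (r:ℝ) * (Δ:ℝ) := by ring
        _ ≤ (k:ℝ) ^ (r-1) := hkpowR
    exact_mod_cast this
  obtain ⟨col, hcol⟩ := ELC.lll_pos hr hΔ hEr hdeg hk hk1
  refine ⟨k, ⟨col, ?_⟩, ?_⟩
  · intro e heE
    simp only [ELC.Avoid, Finset.mem_filter, Finset.mem_univ, true_and] at hcol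
    have := hcol e heE
    unfold ELC.Mono at this
    push_neg at this
    exact this
  · -- k ≤ (4r)^ex Δ^ex + 1 ≤ c Δ^ex
    have hceil : (k : ℝ) ≤ x + 1 := by
      rw [hkdef]
      exact le_of_lt (Nat.ceil_lt_add_one (by linarith))
    have hxsplit : x = (4 * (r : ℝ)) ^ ex * (Δ : ℝ) ^ ex := by
      rw [hx, Real.mul_rpow (by linarith) (by linarith)]
    have hΔex : (1 : ℝ) ≤ (Δ : ℝ) ^ ex := Real.one_le_rpow hΔ1 hex_pos.le
    calc (k : ℝ) ≤ x + 1 := hceil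
      _ = (4 * (r : ℝ)) ^ ex * (Δ : ℝ) ^ ex + 1 := by rw [hxsplit]
      _ ≤ (4 * (r : ℝ)) ^ ex * (Δ : ℝ) ^ ex + (Δ : ℝ) ^ ex := by linarith
      _ = ((4 * (r : ℝ)) ^ ex + 1) * (Δ : ℝ) ^ ex := by ring
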